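/- For β > 1, if m_β ∈ (0,1) satisfies m_β = tanh(β m_β), then the derivative of the map x ↦ tanh(β x) at x = m_β is strictly less than 1, i.e., β(1 - tanh(β m_β)²) = β(1 - m_β²) < 1. -/

import Mathlib

lemma hasDerivAt_tanh' (y : ℝ) :
    HasDerivAt Real.tanh (1 - Real.tanh y ^ 2) y := by
  have hc : Real.cosh y ≠ 0 := ne_of_gt (Real.cosh_pos y)
  have h := (Real.hasDerivAt_sinh y).div (Real.hasDerivAt_cosh y) hc
  have heq : (Real.cosh y * Real.cosh y - Real.sinh y * Real.sinh y) / Real.cosh y ^ 2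
      = 1 - Real.tanh y ^ 2 := by
    rw [Real.tanh_eq_sinh_div_cosh]
    have h1 : Real.cosh y ^ 2 - Real.sinh y ^ 2 = 1 := Real.cosh_sq_sub_sinh_sq y
    field_simp
  rw [heq] at h
  exact h.congr_of_eventuallyEq (by filter_upwards with x using (Real.tanh_eq_sinh_div_cosh x))

/-- For β > 1, if m_β ∈ (0,1) satisfies m_β = tanh(β m_β), then the derivative
of x ↦ tanh(β x) at x = m_β, namely β(1 - tanh(β m_β)²) = β(1 - m_β²),
is strictly less than 1. -/
theorem deriv_tanh_at_fixed_point_lt_one (β m : ℝ) (hβ : 1 < β)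
    (hm : m ∈ Set.Ioo (0 : ℝ) 1) (hfix : m = Real.tanh (β * m)) :
    HasDerivAt (fun x : ℝ => Real.tanh (β * x)) (β * (1 - Real.tanh (β * m) ^ 2)) m ∧
      β * (1 - Real.tanh (β * m) ^ 2) = β * (1 - m ^ 2) ∧
      β * (1 - m ^ 2) < 1 := by
  obtain ⟨hm0, hm1⟩ := hm
  refine ⟨?_, by rw [← hfix], ?_⟩
  · have hinner : HasDerivAt (fun x : ℝ => β * x) β m := by
      simpa using (hasDerivAt_id m).const_mul β
    have := (hasDerivAt_tanh' (β * m)).comp m hinner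
    rw [mul_comm]; exact this
  · set t := β * m with ht
    have ht0 : 0 < t := mul_pos (by linarith) hm0
    have hcosh : (1 : ℝ) ≤ Real.cosh t := Real.one_le_cosh t
    have hsinh : t < Real.sinh t := Real.self_lt_sinh_iff.mpr ht0
    have hc : (0:ℝ) < Real.cosh t := Real.cosh_pos t
    have h1 : Real.cosh t ^ 2 - Real.sinh t ^ 2 = 1 := Real.cosh_sq_sub_sinh_sq t
    have hmc : m * Real.cosh t = Real.sinh t := by
      rw [hfix, Real.tanh_eq_sinh_div_cosh]; field_simp
    have hs0 : 0 < Real.sinh t := by nlinarith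
    have key : t < Real.sinh t * Real.cosh t :=
      lt_of_lt_of_le hsinh (le_mul_of_one_le_right hs0.le hcosh)
    have hcm : Real.cosh t ^ 2 * (1 - m ^ 2) = 1 := by nlinarith [hmc, h1]
    have hβlt : β < Real.cosh t ^ 2 := by
      have h2 : β * m < m * (Real.cosh t ^ 2) := by nlinarith [key, hmc]
      have h3 : m * β < m * (Real.cosh t ^ 2) := by linarith [mul_comm β m]
      exact lt_of_mul_lt_mul_left h3 hm0.le
    nlinarith [hcm, hβlt, hm0, hm1]
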